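/- arXiv:2212.13749 — 4 statements merged into one kernel-verified Lean document; each statement's English description precedes it below -/
import Mathlib

section
/- Let G be a finite simple graph with edge set E and let a ∈ ℝ^E lie on no hyperplane of the matching arrangement MA(G), i.e., Σ_{j=1}^{k} (−1)^{j+1} a_{e_j} ≠ 0 for the edge sequence (e_1, …, e_k) of every simple path of G and of every simple cycle of even length of G. Then for every pair of adjacent matchings M1 ≠ M2 of G, ⟨a, χ_{M1}⟩ ≠ ⟨a, χ_{M2}⟩. -/
open scoped symmDiff
open Classical

noncomputable section

variable {V : Type*}

/-- A matching of `G`: a set of edges of `G`, no two of which share a vertex. -/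
def IsMatchingOf (G : SimpleGraph V) (M : Set (Sym2 V)) : Prop :=
  M ⊆ G.edgeSet ∧ ∀ e ∈ M, ∀ f ∈ M, e ≠ f → ∀ v : V, ¬(v ∈ e ∧ v ∈ f)

/-- The indicator vector `χ_M ∈ ℝ^E` of a set `M` of edges. -/
def chi (G : SimpleGraph V) (M : Set (Sym2 V)) : G.edgeSet → ℝ :=
  fun e => if (e : Sym2 V) ∈ M then 1 else 0

/-- The standard inner product `⟨a, x⟩ = Σ_{e ∈ E} a_e x_e` on `ℝ^E`. -/
def dot (G : SimpleGraph V) [Fintype G.edgeSet] (a x : G.edgeSet → ℝ) : ℝ :=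
  ∑ e, a e * x e

/-- `p` is a (nonempty) simple path, or a simple cycle of even length. -/
def IsSimplePathOrEvenCycle (G : SimpleGraph V) {u v : V} (p : G.Walk u v) : Prop :=
  (p.IsPath ∧ 0 < p.length) ∨ ∃ h : v = u, (p.copy rfl h).IsCycle ∧ Even p.length

/-- `A` is the edge set of a simple path, or of a simple cycle of even length, in `G`. -/
def IsPathOrEvenCycleEdgeSet (G : SimpleGraph V) (A : Set (Sym2 V)) : Prop :=
  ∃ (u v : V) (p : G.Walk u v), IsSimplePathOrEvenCycle G p ∧ A = {e | e ∈ p.edges}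

/-- Two matchings are adjacent if their symmetric difference is the edge set of a
simple path or of a simple cycle of even length. -/
def AdjacentMatchings (G : SimpleGraph V) (M1 M2 : Set (Sym2 V)) : Prop :=
  IsMatchingOf G M1 ∧ IsMatchingOf G M2 ∧ IsPathOrEvenCycleEdgeSet G (M1 ∆ M2)

/-- The alternating sum `a e₁ - a e₂ + a e₃ - ⋯` over a list. -/
def altSum {α : Type*} (a : α → ℝ) : List α → ℝ
  | [] => 0
  | e :: l => a e - altSum a l

/-- Extension by zero of a vector `ℝ^E` to all of `Sym2 V`. -/
def extendE (G : SimpleGraph V) (a : G.edgeSet → ℝ) : Sym2 V → ℝ :=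
  fun e => if h : e ∈ G.edgeSet then a ⟨e, h⟩ else 0

/-- `a` lies on no hyperplane of the matching arrangement `MA(G)`: every alternating sum
along a simple path or an even simple cycle is nonzero. -/
def OffHyperplanes (G : SimpleGraph V) (a : G.edgeSet → ℝ) : Prop :=
  ∀ ⦃u v : V⦄ (p : G.Walk u v), IsSimplePathOrEvenCycle G p →
    altSum (extendE G a) p.edges ≠ 0

/-- `a` and `b` induce the same orientation on adjacent pairs of matchings. -/
def SameOrientation (G : SimpleGraph V) [Fintype G.edgeSet] (a b : G.edgeSet → ℝ) : Prop :=
  ∀ M1 M2 : Set (Sym2 V), AdjacentMatchings G M1 M2 →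
    (dot G a (chi G M1) < dot G a (chi G M2) ↔ dot G b (chi G M1) < dot G b (chi G M2))

/-- The matching polyhedron `P(G) ⊆ ℝ^E` of Edmonds. -/
def matchingPolyhedron (G : SimpleGraph V) [Fintype V] [Fintype G.edgeSet] :
    Set (G.edgeSet → ℝ) :=
  {x | (∀ e, 0 ≤ x e) ∧
       (∀ v : V, (∑ e : G.edgeSet, if v ∈ (e : Sym2 V) then x e else 0) ≤ 1) ∧
       ∀ (S : Finset V) (k : ℕ), S.card = 2 * k + 1 →
         (∑ e : G.edgeSet, if ∀ w ∈ (e : Sym2 V), w ∈ S then x e else 0) ≤ (k : ℝ)}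

/-- The function `a` induces the relation `O` on adjacent matchings. -/
def Induces (G : SimpleGraph V) [Fintype G.edgeSet] (a : G.edgeSet → ℝ)
    (O : Set (Sym2 V) → Set (Sym2 V) → Prop) : Prop :=
  ∀ M1 M2 : Set (Sym2 V), AdjacentMatchings G M1 M2 →
    (O M1 M2 ↔ dot G a (chi G M1) < dot G a (chi G M2))

/-- `O` is an LP-orientation: a relation on pairs of adjacent matchings induced by
some `a ∈ ℝ^E` lying on no hyperplane of `MA(G)`. -/
def IsLPOrientation (G : SimpleGraph V) [Fintype G.edgeSet]
    (O : Set (Sym2 V) → Set (Sym2 V) → Prop) : Prop :=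
  (∀ M1 M2, O M1 M2 → AdjacentMatchings G M1 M2) ∧
  ∃ a : G.edgeSet → ℝ, OffHyperplanes G a ∧ Induces G a O

/-- Consecutive edges of a walk share a vertex. -/
lemma walk_edges_chain' {G : SimpleGraph V} {u v : V} (p : G.Walk u v) :
    List.Chain' (fun e f : Sym2 V => ∃ w, w ∈ e ∧ w ∈ f) p.edges := by
  induction p with
  | nil => exact List.isChain_nil
  | @cons u x v h q ih =>
    rw [SimpleGraph.Walk.edges_cons]
    cases q with
    | nil => exact List.isChain_singleton _
    | @cons x y v h' q' =>
      rw [SimpleGraph.Walk.edges_cons] at ih ⊢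
      exact List.IsChain.cons_cons ⟨x, Sym2.mem_mk_right _ _, Sym2.mem_mk_left _ _⟩ ih

/-- Key computation: if `σ` squares to `1` and flips sign along a list, then the
alternating sum equals `σ` of the head times the sum of `σ x * g x`. -/
lemma altSum_key {g σ : Sym2 V → ℝ} (hσ : ∀ x, σ x * σ x = 1) :
    ∀ (L : List (Sym2 V)), L.Chain' (fun e f => σ f = -σ e) →
      ∀ e l, L = e :: l →
        altSum g L = σ e * (L.map fun x => σ x * g x).sum := by
  intro L
  induction L with
  | nil => intro _ e l he; simp at he
  | cons x t ih =>
    intro hc e l he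
    injection he with h1 h2
    subst h1; subst h2
    cases t with
    | nil =>
      simp only [altSum, List.map, List.sum_cons, List.sum_nil]
      linear_combination (-g x) * hσ x
    | cons y t' =>
      rw [List.Chain', List.isChain_cons_cons] at hc
      have h1 : σ y = -σ x := hc.1
      have h2 := ih hc.2 y t' rfl
      simp only [altSum, List.map, List.sum_cons] at h2 ⊢
      rw [h2, h1]
      linear_combination (-g x) * hσ x

/-- If `a` lies on no hyperplane of `MA(G)`, then `⟨a, χ_{M1}⟩ ≠ ⟨a, χ_{M2}⟩`
for every pair of adjacent matchings `M1 ≠ M2`. -/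
theorem dot_ne_of_offHyperplanes [Fintype V] [DecidableEq V]
    (G : SimpleGraph V) [DecidableRel G.Adj] (a : G.edgeSet → ℝ)
    (ha : OffHyperplanes G a) (M1 M2 : Set (Sym2 V))
    (hadj : AdjacentMatchings G M1 M2) (hne : M1 ≠ M2) :
    dot G a (chi G M1) ≠ dot G a (chi G M2) := by
  classical
  obtain ⟨hM1, hM2, u, v, p, hp, hA⟩ := hadj
  set S : Set (Sym2 V) := M1 ∆ M2 with hS
  set L : List (Sym2 V) := p.edges with hL
  have hmemS : ∀ x, x ∈ S ↔ x ∈ L := by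
    intro x
    constructor
    · intro hx; have := hA ▸ hx; exact this
    · intro hx; rw [hA]; exact hx
  -- σ : sign function
  set σ : Sym2 V → ℝ := fun e => if e ∈ M1 then 1 else -1 with hσdef
  have hσsq : ∀ x, σ x * σ x = 1 := by
    intro x; simp only [hσdef]; split <;> norm_num
  -- nodup of edges
  have hnodup : L.Nodup := by
    rcases hp with ⟨hpath, _⟩ | ⟨h, hcyc, _⟩
    · exact hpath.isTrail.edges_nodup
    · have := hcyc.isTrail.edges_nodup
      rwa [SimpleGraph.Walk.edges_copy] at this
  have hchain : List.Chain' (fun e f : Sym2 V => ∃ w, w ∈ e ∧ w ∈ f) L :=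
    walk_edges_chain' p
  -- sign flip between distinct intersecting edges of S
  have key : ∀ e f : Sym2 V, e ∈ S → f ∈ S → e ≠ f → (∃ w, w ∈ e ∧ w ∈ f) →
      σ f = -σ e := by
    intro e f he hf hef ⟨w, hwe, hwf⟩
    rw [hS, Set.mem_symmDiff] at he hf
    rcases he with ⟨he1, he2⟩ | ⟨he2, he1⟩ <;> rcases hf with ⟨hf1, hf2⟩ | ⟨hf2, hf1⟩
    · exact absurd ⟨hwe, hwf⟩ (hM1.2 e he1 f hf1 hef w)
    · simp [hσdef, he1, hf1]
    · simp [hσdef, he1, hf1]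
    · exact absurd ⟨hwe, hwf⟩ (hM2.2 e he2 f hf2 hef w)
  -- chain of sign flips
  have hflip : ∀ (l : List (Sym2 V)), List.Chain' (fun e f : Sym2 V => ∃ w, w ∈ e ∧ w ∈ f) l →
      l.Nodup → (∀ e ∈ l, e ∈ S) → List.Chain' (fun e f => σ f = -σ e) l := by
    intro l
    induction l with
    | nil => intro _ _ _; exact List.isChain_nil
    | cons x t ih =>
      intro hc hn hm
      rw [List.Chain', List.isChain_cons] at hc ⊢
      refine ⟨?_, ih hc.2 hn.of_cons (fun e he => hm e (List.mem_cons_of_mem _ he))⟩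
      intro y hy
      have hyl : y ∈ t := List.mem_of_mem_head? hy
      have hxy : x ≠ y := by
        rintro rfl; exact (List.nodup_cons.mp hn).1 hyl
      exact key x y (hm x List.mem_cons_self) (hm y (List.mem_cons_of_mem _ hyl))
        hxy (hc.1 y hy)
  have hmemL : ∀ e ∈ L, e ∈ S := fun e he => (hmemS e).mpr he
  have hflipL := hflip L hchain hnodup hmemL
  -- L is nonempty
  have hLne : L ≠ [] := by
    intro h0
    apply hne
    have : S = ∅ := by
      ext x; simp [hmemS x, h0]
    rw [hS] at this
    exact (symmDiff_eq_bot.mp this)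
  obtain ⟨e₀, l₀, hL0⟩ := List.exists_cons_of_ne_nil hLne
  -- f : signed value
  set f : Sym2 V → ℝ := fun x => σ x * extendE G a x with hfdef
  have haltsum : altSum (extendE G a) L = σ e₀ * (L.map f).sum :=
    altSum_key hσsq L hflipL e₀ l₀ hL0
  have haltne : altSum (extendE G a) L ≠ 0 := ha p hp
  have hsumne : (L.map f).sum ≠ 0 := by
    intro h0
    rw [h0, mul_zero] at haltsum
    exact haltne haltsum
  -- relate the dot product difference with the list sum
  have hSsub : S ⊆ G.edgeSet := by
    intro x hx
    rw [hS, Set.mem_symmDiff] at hx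
    rcases hx with ⟨h1, _⟩ | ⟨h1, _⟩
    · exact hM1.1 h1
    · exact hM2.1 h1
  have hdiff : dot G a (chi G M1) - dot G a (chi G M2)
      = ∑ e : G.edgeSet, (if (e : Sym2 V) ∈ S then f (e : Sym2 V) else 0) := by
    rw [dot, dot, ← Finset.sum_sub_distrib]
    refine Finset.sum_congr rfl ?_
    intro e _
    have hext : extendE G a (e : Sym2 V) = a e := by
      simp [extendE, e.2]
    by_cases h1 : (e : Sym2 V) ∈ M1 <;> by_cases h2 : (e : Sym2 V) ∈ M2 <;>
      simp [chi, hfdef, hσdef, h1, h2, hS, Set.mem_symmDiff, hext]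
  have hsum_eq : ∑ e : G.edgeSet, (if (e : Sym2 V) ∈ S then f (e : Sym2 V) else 0)
      = (L.map f).sum := by
    rw [← List.sum_toFinset f hnodup]
    rw [Finset.sum_ite, Finset.sum_const_zero, add_zero]
    refine Finset.sum_bij (fun e _ => (e : Sym2 V)) ?_ ?_ ?_ ?_
    · intro e he
      rw [Finset.mem_filter] at he
      rw [List.mem_toFinset]
      exact (hmemS _).mp he.2
    · intro e1 h1 e2 h2 h
      exact Subtype.ext h
    · intro x hx
      rw [List.mem_toFinset] at hx
      have hxS : x ∈ S := (hmemS x).mpr hx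
      refine ⟨⟨x, hSsub hxS⟩, ?_, rfl⟩
      rw [Finset.mem_filter]
      exact ⟨Finset.mem_univ _, hxS⟩
    · intro e _; rfl
  intro heq
  apply hsumne
  rw [← hsum_eq, ← hdiff, heq, sub_self]
end
end

section
/- Let G be a finite simple graph with edge set E and let a ∈ ℝ^E lie on some hyperplane of the matching arrangement MA(G), i.e., Σ_{j=1}^{k} (−1)^{j+1} a_{e_j} = 0 for the edge sequence (e_1, …, e_k) of some simple path of G or some simple cycle of even length of G. Then there exist adjacent matchings M1 ≠ M2 of G with ⟨a, χ_{M1}⟩ = ⟨a, χ_{M2}⟩. -/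
open scoped symmDiff
open Classical

noncomputable section

variable {V : Type*}

namespace MAaux

variable {α : Type*}

lemma listSum (f : α → ℝ) : ∀ l : List α, (l.map f).sum = ∑ i : Fin l.length, f (l.get i)
  | [] => by simp
  | e :: l => by
    rw [List.map_cons, List.sum_cons, listSum f l]
    simp only [List.length_cons, Fin.sum_univ_succ]
    simp

lemma altSum_eq (f : α → ℝ) :
    ∀ l : List α, altSum f l = ∑ i : Fin l.length, (-1 : ℝ) ^ (i : ℕ) * f (l.get i)
  | [] => by simp [altSum]
  | e :: l => by
    simp only [altSum, altSum_eq f l, List.length_cons, Fin.sum_univ_succ, Fin.val_zero,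
      pow_zero, one_mul, List.get_cons_zero, Fin.val_succ, pow_succ]
    rw [sub_eq_add_neg, ← Finset.sum_neg_distrib]
    congr 1
    refine Finset.sum_congr rfl fun i _ => ?_
    rw [show (e :: l).get i.succ = l.get i from rfl]
    ring

lemma tail_get {l : List α} (i : ℕ) (h : i < l.tail.length) (h' : i + 1 < l.length) :
    l.tail.get ⟨i, h⟩ = l.get ⟨i + 1, h'⟩ := by
  simp [List.get_eq_getElem, List.getElem_tail]

lemma support_get {G : SimpleGraph V} :
    ∀ {u v : V} (p : G.Walk u v) (i : ℕ) (h : i < p.support.length),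
      p.support.get ⟨i, h⟩ = p.getVert i
  | _, _, SimpleGraph.Walk.nil, 0, _ => rfl
  | _, _, SimpleGraph.Walk.cons _ q, 0, _ => rfl
  | _, _, SimpleGraph.Walk.cons _ q, i + 1, h => by
    simpa [SimpleGraph.Walk.getVert_cons_succ] using support_get q i (by simpa using h)

lemma edges_get {G : SimpleGraph V} :
    ∀ {u v : V} (p : G.Walk u v) (i : ℕ) (h : i < p.edges.length),
      p.edges.get ⟨i, h⟩ = s(p.getVert i, p.getVert (i + 1))
  | _, _, SimpleGraph.Walk.cons _ q, 0, _ => by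
    simp [SimpleGraph.Walk.getVert_cons_succ, SimpleGraph.Walk.getVert_zero]
  | _, _, SimpleGraph.Walk.cons _ q, i + 1, h => by
    simpa [SimpleGraph.Walk.getVert_cons_succ] using edges_get q i (by simpa using h)

lemma edges_get' {G : SimpleGraph V} {u v : V} (p : G.Walk u v) (i : Fin p.edges.length) :
    p.edges.get i = s(p.getVert i, p.getVert (i + 1)) := edges_get p i.1 i.2

end MAaux

/-- If `a` lies on some hyperplane of `MA(G)`, then there exist adjacent
matchings `M1 ≠ M2` with `⟨a, χ_{M1}⟩ = ⟨a, χ_{M2}⟩`. -/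
theorem exists_adjacent_dot_eq_of_on_hyperplane [Fintype V] [DecidableEq V]
    (G : SimpleGraph V) [DecidableRel G.Adj] (a : G.edgeSet → ℝ)
    (ha : ∃ (u v : V) (p : G.Walk u v), IsSimplePathOrEvenCycle G p ∧
      altSum (extendE G a) p.edges = 0) :
    ∃ M1 M2 : Set (Sym2 V), AdjacentMatchings G M1 M2 ∧ M1 ≠ M2 ∧
      dot G a (chi G M1) = dot G a (chi G M2) := by
  obtain ⟨u, v, p, hp, hsum⟩ := ha
  set F := extendE G a with hF
  obtain ⟨hnodup, npos, hinj⟩ :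
      p.edges.Nodup ∧ 0 < p.length ∧
      (∀ i j : ℕ, i ≤ p.length → j ≤ p.length → p.getVert i = p.getVert j →
        i = j ∨ (p.length % 2 = 0 ∧ ((i = 0 ∧ j = p.length) ∨ (i = p.length ∧ j = 0)))) := by
    have hsuplen := SimpleGraph.Walk.length_support p
    rcases hp with ⟨hpath, hpos⟩ | ⟨h, hc, heven⟩
    · refine ⟨hpath.isTrail.edges_nodup, hpos, fun i j hi hj hgv => ?_⟩
      left
      have hi' : i < p.support.length := by omega
      have hj' : j < p.support.length := by omega
      have := (hpath.support_nodup.get_inj_iff (i := ⟨i, hi'⟩) (j := ⟨j, hj'⟩)).mp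
        (by rw [MAaux.support_get, MAaux.support_get]; exact hgv)
      exact congrArg Fin.val this
    · subst h
      rw [SimpleGraph.Walk.copy_rfl_rfl] at hc
      have hkey : ∀ i, 1 ≤ i → i ≤ p.length → ∀ j, 1 ≤ j → j ≤ p.length →
          p.getVert i = p.getVert j → i = j := by
        intro i hi1 hi j hj1 hj hgv
        have htl : p.support.tail.length = p.length := by
          rw [List.length_tail, hsuplen]
          omega
        have hi' : i - 1 < p.support.tail.length := by omega
        have hj' : j - 1 < p.support.tail.length := by omega
        have e1 : p.support.tail.get ⟨i - 1, hi'⟩ = p.getVert i := by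
          rw [MAaux.tail_get _ _ (by omega), MAaux.support_get, show i - 1 + 1 = i by omega]
        have e2 : p.support.tail.get ⟨j - 1, hj'⟩ = p.getVert j := by
          rw [MAaux.tail_get _ _ (by omega), MAaux.support_get, show j - 1 + 1 = j by omega]
        have := hc.support_nodup.get_inj_iff.mp (e1.trans (hgv.trans e2.symm))
        have := congrArg Fin.val this
        simp only at this
        omega
      have h3 := hc.three_le_length
      refine ⟨hc.isCircuit.isTrail.edges_nodup, by omega, fun i j hi hj hgv => ?_⟩
      have hev2 : p.length % 2 = 0 := Nat.even_iff.mp heven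
      rcases Nat.eq_zero_or_pos i with rfl | hi1
      · rcases Nat.eq_zero_or_pos j with rfl | hj1
        · exact Or.inl rfl
        · have hgv' : p.getVert p.length = p.getVert j :=
            ((p.getVert_length).trans (p.getVert_zero).symm).trans hgv
          have := hkey p.length (by omega) le_rfl j hj1 hj hgv'
          exact Or.inr ⟨hev2, Or.inl ⟨rfl, this.symm⟩⟩
      · rcases Nat.eq_zero_or_pos j with rfl | hj1
        · have hgv' : p.getVert i = p.getVert p.length :=
            hgv.trans ((p.getVert_zero).trans (p.getVert_length).symm)
          have := hkey i hi1 hi p.length (by omega) le_rfl hgv'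
          exact Or.inr ⟨hev2, Or.inr ⟨this, rfl⟩⟩
        · exact Or.inl (hkey i hi1 hi j hj1 hj hgv)
  have hlen : p.edges.length = p.length := SimpleGraph.Walk.length_edges p
  -- the key geometric fact: same-parity distinct edges of the walk share no vertex
  have hmat : ∀ (i j : Fin p.edges.length) (x : V), (i : ℕ) % 2 = (j : ℕ) % 2 →
      (i : ℕ) ≠ (j : ℕ) → x ∈ p.edges.get i → x ∈ p.edges.get j → False := by
    have core : ∀ (i j : Fin p.edges.length), (i : ℕ) < (j : ℕ) →
        (i : ℕ) % 2 = (j : ℕ) % 2 → ∀ x : V,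
        x ∈ p.edges.get i → x ∈ p.edges.get j → False := by
      intro i j hij hpar x hxi hxj
      rw [MAaux.edges_get' p i] at hxi
      rw [MAaux.edges_get' p j] at hxj
      obtain ⟨ai, hai, hxi'⟩ : ∃ k, (k = (i : ℕ) ∨ k = (i : ℕ) + 1) ∧ x = p.getVert k := by
        rcases Sym2.mem_iff.mp hxi with h | h
        exacts [⟨_, Or.inl rfl, h⟩, ⟨_, Or.inr rfl, h⟩]
      obtain ⟨bj, hbj, hxj'⟩ : ∃ k, (k = (j : ℕ) ∨ k = (j : ℕ) + 1) ∧ x = p.getVert k := by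
        rcases Sym2.mem_iff.mp hxj with h | h
        exacts [⟨_, Or.inl rfl, h⟩, ⟨_, Or.inr rfl, h⟩]
      have hgv : p.getVert ai = p.getVert bj := by rw [← hxi', ← hxj']
      have hi2 : (i : ℕ) < p.length := hlen ▸ i.2
      have hj2 : (j : ℕ) < p.length := hlen ▸ j.2
      rcases hinj ai bj (by omega) (by omega) hgv with h | ⟨hev, h⟩ <;> omega
    intro i j x hpar hne hxi hxj
    rcases Nat.lt_or_ge (i : ℕ) (j : ℕ) with h | h
    · exact core i j h hpar x hxi hxj
    · exact core j i (by omega) hpar.symm x hxj hxi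
  set M1 : Set (Sym2 V) := {e | ∃ i : Fin p.edges.length, (i : ℕ) % 2 = 0 ∧ p.edges.get i = e}
    with hM1def
  set M2 : Set (Sym2 V) := {e | ∃ i : Fin p.edges.length, (i : ℕ) % 2 = 1 ∧ p.edges.get i = e}
    with hM2def
  have hgetinj : ∀ i j : Fin p.edges.length, p.edges.get i = p.edges.get j → i = j :=
    fun i j h => hnodup.get_inj_iff.mp h
  have hmatch : ∀ (r : ℕ) (M : Set (Sym2 V)),
      M = {e | ∃ i : Fin p.edges.length, (i : ℕ) % 2 = r ∧ p.edges.get i = e} →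
      IsMatchingOf G M := by
    intro r M hM
    subst hM
    constructor
    · rintro e ⟨i, _, rfl⟩
      exact SimpleGraph.Walk.edges_subset_edgeSet p (List.mem_iff_get.mpr ⟨i, rfl⟩)
    · rintro e ⟨i, hi, rfl⟩ f ⟨j, hj, rfl⟩ hne x ⟨hx1, hx2⟩
      refine hmat i j x (hi.trans hj.symm) (fun h => hne ?_) hx1 hx2
      rw [Fin.ext h]
  have hM1 : IsMatchingOf G M1 := hmatch 0 M1 hM1def
  have hM2 : IsMatchingOf G M2 := hmatch 1 M2 hM2def
  have hnotM2 : ∀ i : Fin p.edges.length, (i : ℕ) % 2 = 0 → p.edges.get i ∉ M2 := by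
    rintro i hi ⟨j, hj, hget⟩
    have := congrArg Fin.val (hgetinj j i hget)
    omega
  have hnotM1 : ∀ i : Fin p.edges.length, (i : ℕ) % 2 = 1 → p.edges.get i ∉ M1 := by
    rintro i hi ⟨j, hj, hget⟩
    have := congrArg Fin.val (hgetinj j i hget)
    omega
  have hsd : M1 ∆ M2 = {e | e ∈ p.edges} := by
    ext e
    simp only [Set.mem_symmDiff, Set.mem_setOf_eq]
    constructor
    · rintro (⟨⟨i, _, rfl⟩, _⟩ | ⟨⟨i, _, rfl⟩, _⟩) <;> exact List.mem_iff_get.mpr ⟨i, rfl⟩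
    · intro he
      obtain ⟨i, rfl⟩ := List.mem_iff_get.mp he
      rcases Nat.mod_two_eq_zero_or_one (i : ℕ) with h | h
      · exact Or.inl ⟨⟨i, h, rfl⟩, hnotM2 i h⟩
      · exact Or.inr ⟨⟨i, h, rfl⟩, hnotM1 i h⟩
  have h0 : 0 < p.edges.length := by omega
  have hne12 : M1 ≠ M2 := by
    intro h
    have hmem : p.edges.get ⟨0, h0⟩ ∈ M1 := ⟨⟨0, h0⟩, rfl, rfl⟩
    rw [h] at hmem
    exact hnotM2 ⟨0, h0⟩ rfl hmem
  -- dot product computation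
  have hext : ∀ e : G.edgeSet, F (e : Sym2 V) = a e := by
    rintro ⟨e, he⟩
    simp [hF, extendE, he]
  have hdot : ∀ M : Set (Sym2 V),
      dot G a (chi G M) = ∑ e : G.edgeSet, (if (e : Sym2 V) ∈ M then F (e : Sym2 V) else 0) := by
    intro M
    unfold dot chi
    refine Finset.sum_congr rfl fun e _ => ?_
    by_cases h : (e : Sym2 V) ∈ M <;> simp [h, hext e]
  set g : Sym2 V → ℝ :=
    fun e => (if e ∈ M1 then F e else 0) - (if e ∈ M2 then F e else 0) with hg
  have h1 : dot G a (chi G M1) - dot G a (chi G M2) = ∑ e : G.edgeSet, g (e : Sym2 V) := by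
    rw [hdot M1, hdot M2, ← Finset.sum_sub_distrib]
    simp only [hg]
    exact Finset.sum_congr rfl fun e _ => by congr
  have h2 : ∑ e : G.edgeSet, g (e : Sym2 V) = ∑ e ∈ G.edgeFinset, g e :=
    (Finset.sum_subtype _ (fun x => SimpleGraph.mem_edgeFinset) g).symm
  have h3 : ∑ e ∈ G.edgeFinset, g e = ∑ e ∈ p.edges.toFinset, g e := by
    refine (Finset.sum_subset ?_ ?_).symm
    · intro e he
      rw [List.mem_toFinset] at he
      exact SimpleGraph.mem_edgeFinset.mpr (SimpleGraph.Walk.edges_subset_edgeSet p he)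
    · intro e _ he
      rw [List.mem_toFinset] at he
      have e1 : e ∉ M1 := by rintro ⟨i, _, rfl⟩; exact he (List.mem_iff_get.mpr ⟨i, rfl⟩)
      have e2 : e ∉ M2 := by rintro ⟨i, _, rfl⟩; exact he (List.mem_iff_get.mpr ⟨i, rfl⟩)
      simp [hg, e1, e2]
  have h4 : ∑ e ∈ p.edges.toFinset, g e = (p.edges.map g).sum :=
    List.sum_toFinset g hnodup
  have h5 : (p.edges.map g).sum = altSum F p.edges := by
    rw [MAaux.listSum, MAaux.altSum_eq]
    refine Finset.sum_congr rfl fun i _ => ?_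
    rcases Nat.mod_two_eq_zero_or_one (i : ℕ) with hpar | hpar
    · have m1 : p.edges.get i ∈ M1 := ⟨i, hpar, rfl⟩
      have m2 := hnotM2 i hpar
      have hevi : Even (i : ℕ) := Nat.even_iff.mpr hpar
      simp only [List.get_eq_getElem] at m1 m2
      simp [hg, m1, m2, Even.neg_one_pow hevi]
    · have m1 := hnotM1 i hpar
      have m2 : p.edges.get i ∈ M2 := ⟨i, hpar, rfl⟩
      have hodd : Odd (i : ℕ) := Nat.odd_iff.mpr hpar
      simp only [List.get_eq_getElem] at m1 m2
      simp [hg, m1, m2, Odd.neg_one_pow hodd]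
  refine ⟨M1, M2, ⟨hM1, hM2, u, v, p, hp, hsd⟩, hne12, ?_⟩
  have hz : dot G a (chi G M1) - dot G a (chi G M2) = 0 := by
    rw [h1, h2, h3, h4, h5, hsum]
  linarith
end
end

section
/- Let G be a finite simple graph with edge set E and a ∈ ℝ^E. Then a lies on no hyperplane of the matching arrangement MA(G) if and only if ⟨a, χ_{M1}⟩ ≠ ⟨a, χ_{M2}⟩ for every pair of adjacent matchings M1 ≠ M2 of G. -/
open scoped symmDiff
open Classical

noncomputable section

variable {V : Type*}

/-! ### Auxiliary machinery -/

section Aux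

/-- Entries of a list at even positions (0-indexed). -/
def mEvens {α : Type*} : List α → List α
  | [] => []
  | [e] => [e]
  | e :: _ :: l => e :: mEvens l

/-- Entries of a list at odd positions (0-indexed). -/
def mOdds {α : Type*} (l : List α) : List α := mEvens l.tail

@[simp] theorem mEvens_nil {α : Type*} : mEvens ([] : List α) = [] := rfl
@[simp] theorem mOdds_nil {α : Type*} : mOdds ([] : List α) = [] := rfl
@[simp] theorem mOdds_cons {α : Type*} (e : α) (l : List α) : mOdds (e :: l) = mEvens l := rfl
@[simp] theorem mEvens_cons {α : Type*} (e : α) (l : List α) :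
    mEvens (e :: l) = e :: mOdds l := by
  cases l <;> rfl

theorem altSum_eq_sub {α : Type*} (a : α → ℝ) (l : List α) :
    altSum a l = ((mEvens l).map a).sum - ((mOdds l).map a).sum := by
  induction l with
  | nil => simp [altSum]
  | cons e l ih =>
    simp only [altSum, mEvens_cons, mOdds_cons, List.map_cons, List.sum_cons, ih]
    ring

theorem mEvens_mOdds_sublist {α : Type*} (l : List α) :
    (mEvens l).Sublist l ∧ (mOdds l).Sublist l := by
  induction l with
  | nil => exact ⟨List.Sublist.refl _, List.Sublist.refl _⟩
  | cons e l ih =>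
    rw [mEvens_cons, mOdds_cons]
    exact ⟨ih.2.cons₂ e, ih.1.cons e⟩

theorem mem_mEvens_or_mOdds {α : Type*} {l : List α} {e : α} (he : e ∈ l) :
    e ∈ mEvens l ∨ e ∈ mOdds l := by
  induction l with
  | nil => simp at he
  | cons x t ih =>
    simp only [mEvens_cons, mOdds_cons]
    rcases List.mem_cons.mp he with rfl | ht
    · exact Or.inl (List.mem_cons_self)
    · rcases ih ht with h | h
      · exact Or.inr h
      · exact Or.inl (List.mem_cons_of_mem _ h)

theorem not_mem_mEvens_and_mOdds {α : Type*} {l : List α} (hl : l.Nodup) {e : α}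
    (h1 : e ∈ mEvens l) (h2 : e ∈ mOdds l) : False := by
  induction l with
  | nil => simp at h1
  | cons x t ih =>
    simp only [mEvens_cons, mOdds_cons] at h1 h2
    rcases List.mem_cons.mp h1 with rfl | h1'
    · exact (List.nodup_cons.mp hl).1 ((mEvens_mOdds_sublist t).1.mem h2)
    · exact ih (List.nodup_cons.mp hl).2 h2 h1'

variable {G : SimpleGraph V}

/-- Two edges sharing no vertex. -/
def vdisj (e f : Sym2 V) : Prop := ∀ x, x ∈ e → x ∉ f

theorem vdisj_symm : Symmetric (vdisj (V := V)) :=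
  fun _ _ h x hx hx' => h x hx' hx

theorem mem_support_of_mem_edge {u v : V} (q : G.Walk u v) {e : Sym2 V} {x : V}
    (he : e ∈ q.edges) (hx : x ∈ e) : x ∈ q.support := by
  induction e with
  | _ a b =>
    rcases Sym2.mem_iff.mp hx with rfl | rfl
    · exact q.fst_mem_support_of_mem_edges he
    · exact q.snd_mem_support_of_mem_edges he

theorem start_mem_head_edge {u v : V} (q : G.Walk u v) {e : Sym2 V}
    (he : q.edges.head? = some e) : u ∈ e := by
  cases q with
  | nil => simp at he
  | cons h q => simp only [SimpleGraph.Walk.edges_cons, List.head?_cons,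
      Option.some.injEq] at he; subst he; simp

theorem chain'_shares {u v : V} (q : G.Walk u v) :
    q.edges.Chain' (fun e f => ∃ x, x ∈ e ∧ x ∈ f) := by
  induction q with
  | nil => exact List.isChain_nil
  | cons h q ih =>
    rw [SimpleGraph.Walk.edges_cons]; unfold List.Chain'; rw [List.isChain_cons]
    refine ⟨fun f hf => ⟨_, by simp, start_mem_head_edge q hf⟩, ih⟩

theorem pathAux {u v : V} (p : G.Walk u v) (hp : p.IsPath) :
    (mEvens p.edges).Pairwise vdisj ∧ (mOdds p.edges).Pairwise vdisj ∧
    (∀ f ∈ mOdds p.edges, u ∉ f) ∧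
    (Even p.length → ∀ f ∈ mEvens p.edges, v ∉ f) ∧
    (¬Even p.length → ∀ f ∈ mOdds p.edges, v ∉ f) := by
  induction p with
  | nil => simp [SimpleGraph.Walk.edges_nil]
  | @cons u w v h q ih =>
    have hq : q.IsPath := hp.of_cons
    have hu : u ∉ q.support := by
      have := hp.support_nodup
      rw [SimpleGraph.Walk.support_cons, List.nodup_cons] at this
      exact this.1
    obtain ⟨ihA, ihB, ihC, ihD, ihE⟩ := ih hq
    have hu_not : ∀ f ∈ q.edges, u ∉ f := fun f hf hxf =>
      hu (mem_support_of_mem_edge q hf hxf)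
    have hvdisj0 : ∀ f ∈ mOdds q.edges, vdisj s(u, w) f := by
      intro f hf x hx hxf
      rcases Sym2.mem_iff.mp hx with rfl | rfl
      · exact hu_not f ((mEvens_mOdds_sublist q.edges).2.mem hf) hxf
      · exact ihC f hf hxf
    have hvnew : v ≠ u := fun hvu =>
      hu (hvu ▸ q.end_mem_support)
    refine ⟨?_, ?_, ?_, ?_, ?_⟩
    · rw [SimpleGraph.Walk.edges_cons, mEvens_cons]
      exact List.pairwise_cons.mpr ⟨hvdisj0, ihB⟩
    · rw [SimpleGraph.Walk.edges_cons, mOdds_cons]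
      exact ihA
    · rw [SimpleGraph.Walk.edges_cons, mOdds_cons]
      intro f hf
      exact hu_not f ((mEvens_mOdds_sublist q.edges).1.mem hf)
    · intro hev
      rw [SimpleGraph.Walk.length_cons, Nat.even_add_one] at hev
      rw [SimpleGraph.Walk.edges_cons, mEvens_cons]
      intro f hf
      rcases List.mem_cons.mp hf with rfl | hf'
      · -- f = s(u, w); show v ∉ s(u,w)
        have hqnil : q.length ≠ 0 := by
          intro h0
          exact hev (by simp [h0])
        have hvw : v ≠ w := by
          intro hvw
          cases q with
          | nil => exact hqnil rfl
          | cons h' q' =>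
            have : w ∉ q'.support := by
              have := hq.support_nodup
              rw [SimpleGraph.Walk.support_cons, List.nodup_cons] at this
              exact this.1
            exact this (hvw ▸ q'.end_mem_support)
        intro hv
        rcases Sym2.mem_iff.mp hv with rfl | rfl
        · exact hvnew rfl
        · exact hvw rfl
      · exact ihE hev f hf'
    · intro hnev
      rw [SimpleGraph.Walk.length_cons, Nat.even_add_one, not_not] at hnev
      rw [SimpleGraph.Walk.edges_cons, mOdds_cons]
      exact ihD hnev

theorem alternation {M1 M2 : Set (Sym2 V)}
    (h1 : IsMatchingOf G M1) (h2 : IsMatchingOf G M2) :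
    ∀ l : List (Sym2 V), l.Chain' (fun e f => ∃ x, x ∈ e ∧ x ∈ f) → l.Nodup →
      (∀ e ∈ l, e ∈ M1 ∆ M2) →
      ((∀ e ∈ mEvens l, e ∈ M1 \ M2) ∧ (∀ e ∈ mOdds l, e ∈ M2 \ M1)) ∨
      ((∀ e ∈ mEvens l, e ∈ M2 \ M1) ∧ (∀ e ∈ mOdds l, e ∈ M1 \ M2)) := by
  intro l
  induction l with
  | nil => intro _ _ _; left; constructor <;> simp
  | cons e t ih =>
    intro hch hnd hmem
    cases t with
    | nil =>
      rcases Set.mem_symmDiff.mp (hmem e (List.mem_cons_self)) with h | h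
      · left
        constructor
        · intro f hf
          simp only [mEvens_cons, mOdds_cons] at hf
          rcases List.mem_cons.mp hf with rfl | hf' <;> simp_all
        · intro f hf; simp at hf
      · right
        constructor
        · intro f hf
          simp only [mEvens_cons, mOdds_cons] at hf
          rcases List.mem_cons.mp hf with rfl | hf' <;> simp_all
        · intro f hf; simp at hf
    | cons f t' =>
      have hch' : (f :: t').Chain' (fun e f => ∃ x, x ∈ e ∧ x ∈ f) :=
        (List.isChain_cons.mp hch).2
      have hnd' : (f :: t').Nodup := (List.nodup_cons.mp hnd).2
      have hmem' : ∀ g ∈ f :: t', g ∈ M1 ∆ M2 :=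
        fun g hg => hmem g (List.mem_cons_of_mem _ hg)
      have hef : ∃ x, x ∈ e ∧ x ∈ f := (List.isChain_cons_cons.mp hch).1
      obtain ⟨x, hxe, hxf⟩ := hef
      have hne : e ≠ f := by
        intro hef'
        exact (List.nodup_cons.mp hnd).1 (hef' ▸ List.mem_cons_self)
      have hfEv : f ∈ mEvens (f :: t') := by simp
      rcases ih hch' hnd' hmem' with ⟨hA, hB⟩ | ⟨hA, hB⟩
      · -- mEvens (f::t') ⊆ M1 \ M2
        have hfM1 : f ∈ M1 \ M2 := hA f hfEv
        have heM2 : e ∈ M2 \ M1 := by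
          rcases Set.mem_symmDiff.mp (hmem e (List.mem_cons_self)) with h | h
          · exact absurd ⟨hxe, hxf⟩ (h1.2 e h.1 f hfM1.1 hne x)
          · exact ⟨h.1, h.2⟩
        right
        constructor
        · intro g hg
          simp only [mEvens_cons] at hg
          rcases List.mem_cons.mp hg with rfl | hg'
          · exact heM2
          · simp only [mOdds_cons] at hg'
            exact hB g hg'
        · intro g hg
          simp only [mOdds_cons] at hg
          exact hA g hg
      · have hfM2 : f ∈ M2 \ M1 := hA f hfEv
        have heM1 : e ∈ M1 \ M2 := by
          rcases Set.mem_symmDiff.mp (hmem e (List.mem_cons_self)) with h | h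
          · exact ⟨h.1, h.2⟩
          · exact absurd ⟨hxe, hxf⟩ (h2.2 e h.1 f hfM2.1 hne x)
        left
        constructor
        · intro g hg
          simp only [mEvens_cons] at hg
          rcases List.mem_cons.mp hg with rfl | hg'
          · exact heM1
          · simp only [mOdds_cons] at hg'
            exact hB g hg'
        · intro g hg
          simp only [mOdds_cons] at hg
          exact hA g hg

theorem list_sum_eq [Fintype G.edgeSet] (a : G.edgeSet → ℝ)
    (l : List (Sym2 V)) (hn : l.Nodup) (hsub : ∀ e ∈ l, e ∈ G.edgeSet) :
    ((l.map (extendE G a)).sum) = ∑ e : G.edgeSet, if (e : Sym2 V) ∈ l then a e else 0 := by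
  classical
  have h1 : (∑ e : G.edgeSet, if (e : Sym2 V) ∈ l then a e else 0)
      = ∑ e : G.edgeSet, (fun x => if x ∈ l then extendE G a x else 0) (e : Sym2 V) := by
    refine Finset.sum_congr rfl fun e _ => ?_
    by_cases h : (e : Sym2 V) ∈ l <;> simp [h, extendE, e.2]
  rw [h1, Finset.sum_set_coe (f := fun x => if x ∈ l then extendE G a x else 0)]
  rw [← Finset.sum_filter]
  have h2 : G.edgeSet.toFinset.filter (fun x => x ∈ l) = l.toFinset := by
    ext x
    simp only [Finset.mem_filter, Set.mem_toFinset, List.mem_toFinset]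
    exact ⟨fun h => h.2, fun h => ⟨hsub x h, h⟩⟩
  rw [h2, List.sum_toFinset _ hn]

theorem dot_chi_sub [Fintype G.edgeSet] (a : G.edgeSet → ℝ) (M1 M2 : Set (Sym2 V)) :
    dot G a (chi G M1) - dot G a (chi G M2)
      = (∑ e : G.edgeSet, if (e : Sym2 V) ∈ M1 \ M2 then a e else 0)
        - (∑ e : G.edgeSet, if (e : Sym2 V) ∈ M2 \ M1 then a e else 0) := by
  classical
  unfold dot chi
  rw [← Finset.sum_sub_distrib, ← Finset.sum_sub_distrib]
  refine Finset.sum_congr rfl fun e _ => ?_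
  by_cases hm1 : (e : Sym2 V) ∈ M1 <;> by_cases hm2 : (e : Sym2 V) ∈ M2 <;>
    simp [hm1, hm2, Set.mem_diff]

theorem edges_nodup_of_spec {u v : V} {p : G.Walk u v}
    (hps : IsSimplePathOrEvenCycle G p) : p.edges.Nodup := by
  rcases hps with ⟨hp, _⟩ | ⟨h, hc, _⟩
  · exact hp.edges_nodup
  · have := hc.isCircuit.isTrail.edges_nodup
    rwa [SimpleGraph.Walk.edges_copy] at this

theorem key_lemma [Fintype G.edgeSet] (a : G.edgeSet → ℝ)
    {u v : V} (p : G.Walk u v) (hps : IsSimplePathOrEvenCycle G p)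
    {M1 M2 : Set (Sym2 V)} (h1 : IsMatchingOf G M1) (h2 : IsMatchingOf G M2)
    (hΔ : M1 ∆ M2 = {e | e ∈ p.edges}) :
    dot G a (chi G M1) - dot G a (chi G M2) = altSum (extendE G a) p.edges ∨
    dot G a (chi G M1) - dot G a (chi G M2) = -altSum (extendE G a) p.edges := by
  classical
  have hnd : p.edges.Nodup := edges_nodup_of_spec hps
  have hmem : ∀ e ∈ p.edges, e ∈ M1 ∆ M2 := by
    intro e he; rw [hΔ]; exact he
  have hsubE : ∀ e ∈ p.edges, e ∈ G.edgeSet := fun e he => p.edges_subset_edgeSet he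
  have hsubEv : ∀ e ∈ mEvens p.edges, e ∈ G.edgeSet :=
    fun e he => hsubE e ((mEvens_mOdds_sublist p.edges).1.mem he)
  have hsubOd : ∀ e ∈ mOdds p.edges, e ∈ G.edgeSet :=
    fun e he => hsubE e ((mEvens_mOdds_sublist p.edges).2.mem he)
  have hndEv : (mEvens p.edges).Nodup := hnd.sublist (mEvens_mOdds_sublist p.edges).1
  have hndOd : (mOdds p.edges).Nodup := hnd.sublist (mEvens_mOdds_sublist p.edges).2
  rcases alternation h1 h2 p.edges (chain'_shares p) hnd hmem with ⟨hA, hB⟩ | ⟨hA, hB⟩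
  · left
    have hEv : ∀ e : Sym2 V, e ∈ M1 \ M2 ↔ e ∈ mEvens p.edges := by
      intro e
      constructor
      · intro he
        have hel : e ∈ p.edges := by
          have h' : e ∈ M1 ∆ M2 := Set.mem_symmDiff.mpr (Or.inl ⟨he.1, he.2⟩)
          rw [hΔ] at h'; exact h'
        rcases mem_mEvens_or_mOdds hel with h | h
        · exact h
        · exact absurd (hB e h).1 he.2
      · intro he; exact hA e he
    have hOd : ∀ e : Sym2 V, e ∈ M2 \ M1 ↔ e ∈ mOdds p.edges := by
      intro e
      constructor
      · intro he
        have hel : e ∈ p.edges := by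
          have h' : e ∈ M1 ∆ M2 := Set.mem_symmDiff.mpr (Or.inr ⟨he.1, he.2⟩)
          rw [hΔ] at h'; exact h'
        rcases mem_mEvens_or_mOdds hel with h | h
        · exact absurd (hA e h).1 he.2
        · exact h
      · intro he; exact hB e he
    rw [dot_chi_sub, altSum_eq_sub,
      list_sum_eq a _ hndEv hsubEv, list_sum_eq a _ hndOd hsubOd]
    congr 1
    · exact Finset.sum_congr rfl fun e _ => if_congr (hEv ↑e) rfl rfl
    · exact Finset.sum_congr rfl fun e _ => if_congr (hOd ↑e) rfl rfl
  · right
    have hEv : ∀ e : Sym2 V, e ∈ M2 \ M1 ↔ e ∈ mEvens p.edges := by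
      intro e
      constructor
      · intro he
        have hel : e ∈ p.edges := by
          have h' : e ∈ M1 ∆ M2 := Set.mem_symmDiff.mpr (Or.inr ⟨he.1, he.2⟩)
          rw [hΔ] at h'; exact h'
        rcases mem_mEvens_or_mOdds hel with h | h
        · exact h
        · exact absurd (hB e h).1 he.2
      · intro he; exact hA e he
    have hOd : ∀ e : Sym2 V, e ∈ M1 \ M2 ↔ e ∈ mOdds p.edges := by
      intro e
      constructor
      · intro he
        have hel : e ∈ p.edges := by
          have h' : e ∈ M1 ∆ M2 := Set.mem_symmDiff.mpr (Or.inl ⟨he.1, he.2⟩)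
          rw [hΔ] at h'; exact h'
        rcases mem_mEvens_or_mOdds hel with h | h
        · exact absurd (hA e h).1 he.2
        · exact h
      · intro he; exact hB e he
    rw [dot_chi_sub, altSum_eq_sub,
      list_sum_eq a _ hndEv hsubEv, list_sum_eq a _ hndOd hsubOd]
    rw [neg_sub]
    congr 1
    · exact Finset.sum_congr rfl fun e _ => if_congr (hOd ↑e) rfl rfl
    · exact Finset.sum_congr rfl fun e _ => if_congr (hEv ↑e) rfl rfl

/-- The two "alternating" matchings extracted from a simple path or even cycle. -/
theorem matchings_of_spec {u v : V} (p : G.Walk u v) (hps : IsSimplePathOrEvenCycle G p) :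
    IsMatchingOf G {e | e ∈ mEvens p.edges} ∧ IsMatchingOf G {e | e ∈ mOdds p.edges} := by
  have hsubE : ∀ e ∈ p.edges, e ∈ G.edgeSet := fun e he => p.edges_subset_edgeSet he
  have hnd : p.edges.Nodup := edges_nodup_of_spec hps
  have hpairs : (mEvens p.edges).Pairwise vdisj ∧ (mOdds p.edges).Pairwise vdisj := by
    rcases hps with ⟨hp, _⟩ | ⟨h, hc, heven⟩
    · exact ⟨(pathAux p hp).1, (pathAux p hp).2.1⟩
    · subst h
      rw [SimpleGraph.Walk.copy_rfl_rfl] at hc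
      cases p with
      | nil => exact absurd rfl hc.ne_nil
      | @cons u w v h q =>
        rw [SimpleGraph.Walk.cons_isCycle_iff] at hc
        obtain ⟨hq, _⟩ := hc
        obtain ⟨qA, qB, qC, qD, qE⟩ := pathAux q hq
        have hqodd : ¬Even q.length := by
          rw [SimpleGraph.Walk.length_cons, Nat.even_add_one] at heven
          exact heven
        constructor
        · rw [SimpleGraph.Walk.edges_cons, mEvens_cons]
          refine List.pairwise_cons.mpr ⟨?_, qB⟩
          intro f hf x hx hxf
          rcases Sym2.mem_iff.mp hx with rfl | rfl
          · exact qE hqodd f hf hxf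
          · exact qC f hf hxf
        · rw [SimpleGraph.Walk.edges_cons, mOdds_cons]
          exact qA
  constructor
  · refine ⟨fun e he => hsubE e ((mEvens_mOdds_sublist p.edges).1.mem he), ?_⟩
    intro e he f hf hne x hx
    exact (haveI : Std.Symm (vdisj (V := V)) := ⟨fun _ _ h => vdisj_symm h⟩; List.Pairwise.forall hpairs.1) he hf hne x hx.1 hx.2
  · refine ⟨fun e he => hsubE e ((mEvens_mOdds_sublist p.edges).2.mem he), ?_⟩
    intro e he f hf hne x hx
    exact (haveI : Std.Symm (vdisj (V := V)) := ⟨fun _ _ h => vdisj_symm h⟩; List.Pairwise.forall hpairs.2) he hf hne x hx.1 hx.2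

end Aux

/-- `a` lies on no hyperplane of `MA(G)` iff `⟨a, χ_{M1}⟩ ≠ ⟨a, χ_{M2}⟩` for
every pair of adjacent matchings `M1 ≠ M2`. -/
theorem offHyperplanes_iff_dot_ne [Fintype V] [DecidableEq V]
    (G : SimpleGraph V) [DecidableRel G.Adj] (a : G.edgeSet → ℝ) :
    OffHyperplanes G a ↔
      ∀ M1 M2 : Set (Sym2 V), AdjacentMatchings G M1 M2 → M1 ≠ M2 →
        dot G a (chi G M1) ≠ dot G a (chi G M2) := by
  constructor
  · intro hOff M1 M2 hadj _ heq
    obtain ⟨h1, h2, u, v, p, hps, hΔ⟩ := hadj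
    have halt : altSum (extendE G a) p.edges ≠ 0 := hOff p hps
    have hz : dot G a (chi G M1) - dot G a (chi G M2) = 0 := sub_eq_zero_of_eq heq
    rcases key_lemma a p hps h1 h2 hΔ with h | h
    · exact halt (by rw [← h, hz])
    · have h0 : -altSum (extendE G a) p.edges = 0 := by rw [← h, hz]
      exact halt (neg_eq_zero.mp h0)
  · intro hyp u v p hps
    intro h0
    set M1 : Set (Sym2 V) := {e | e ∈ mEvens p.edges} with hM1
    set M2 : Set (Sym2 V) := {e | e ∈ mOdds p.edges} with hM2
    obtain ⟨m1, m2⟩ := matchings_of_spec p hps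
    have hnd : p.edges.Nodup := edges_nodup_of_spec hps
    have hΔ : M1 ∆ M2 = {e | e ∈ p.edges} := by
      ext e
      rw [Set.mem_symmDiff]
      constructor
      · rintro (⟨he, _⟩ | ⟨he, _⟩)
        · exact (mEvens_mOdds_sublist p.edges).1.mem he
        · exact (mEvens_mOdds_sublist p.edges).2.mem he
      · intro he
        rcases mem_mEvens_or_mOdds he with h | h
        · exact Or.inl ⟨h, fun h' => not_mem_mEvens_and_mOdds hnd h h'⟩
        · exact Or.inr ⟨h, fun h' => not_mem_mEvens_and_mOdds hnd h' h⟩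
    have hlen : 0 < p.length := by
      rcases hps with ⟨_, hl⟩ | ⟨h, hc, _⟩
      · exact hl
      · have h3 := hc.three_le_length
        rw [SimpleGraph.Walk.length_copy] at h3
        omega
    obtain ⟨e0, t, hE⟩ : ∃ e0 t, p.edges = e0 :: t := by
      cases hE : p.edges with
      | nil =>
        exfalso
        have := p.length_edges
        rw [hE] at this
        simp at this
        omega
      | cons e0 t => exact ⟨e0, t, rfl⟩
    have he0M1 : e0 ∈ M1 := by
      rw [hM1]
      simp only [Set.mem_setOf_eq, hE, mEvens_cons]
      exact List.mem_cons_self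
    have he0M2 : e0 ∉ M2 := by
      rw [hM2]
      simp only [Set.mem_setOf_eq]
      intro h'
      exact not_mem_mEvens_and_mOdds hnd (by rw [hE, mEvens_cons]; exact List.mem_cons_self) h'
    have hne : M1 ≠ M2 := fun h => he0M2 (h ▸ he0M1)
    have hadj : AdjacentMatchings G M1 M2 := ⟨m1, m2, u, v, p, hps, hΔ⟩
    have hdne := hyp M1 M2 hadj hne
    have hsub : dot G a (chi G M1) - dot G a (chi G M2) ≠ 0 := sub_ne_zero_of_ne hdne
    rcases key_lemma a p hps m1 m2 hΔ with h | h
    · rw [h, h0] at hsub; exact hsub rfl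
    · rw [h, h0] at hsub; exact hsub neg_zero
end
end

section
/- Let G be a finite simple graph with edge set E, and let a, b ∈ ℝ^E each lie on no hyperplane of the matching arrangement MA(G). Suppose a and b induce the same orientation, i.e., for every pair of adjacent matchings M1, M2 of G: ⟨a, χ_{M1}⟩ < ⟨a, χ_{M2}⟩ if and only if ⟨b, χ_{M1}⟩ < ⟨b, χ_{M2}⟩. Then a and b lie in the same region of MA(G), i.e., in the same connected component of ℝ^E minus the union of the hyperplanes of MA(G). -/
open scoped symmDiff
open Classical

noncomputable section

variable {V : Type*}

section AuxProofs

variable {α : Type*}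

/-- Split a list into the elements at odd and even positions. -/
def splitAlt : List α → List α × List α
  | [] => ([], [])
  | e :: l => (e :: (splitAlt l).2, (splitAlt l).1)

lemma splitAlt_perm (l : List α) : ((splitAlt l).1 ++ (splitAlt l).2).Perm l := by
  induction l with
  | nil => simp [splitAlt]
  | cons e l ih =>
    simpa [splitAlt] using (List.Perm.cons e ((List.perm_append_comm).trans ih))

lemma mem_of_splitAlt_fst {l : List α} {e : α} (h : e ∈ (splitAlt l).1) : e ∈ l :=
  (splitAlt_perm l).subset (List.mem_append_left _ h)

lemma mem_of_splitAlt_snd {l : List α} {e : α} (h : e ∈ (splitAlt l).2) : e ∈ l :=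
  (splitAlt_perm l).subset (List.mem_append_right _ h)

lemma altSum_eq_split (f : α → ℝ) (l : List α) :
    altSum f l = ((splitAlt l).1.map f).sum - ((splitAlt l).2.map f).sum := by
  induction l with
  | nil => simp [altSum, splitAlt]
  | cons e l ih => simp [altSum, splitAlt, ih]; ring

lemma altSum_comb (f g : α → ℝ) (c d : ℝ) (l : List α) :
    altSum (fun e => c * f e + d * g e) l = c * altSum f l + d * altSum g l := by
  induction l with
  | nil => simp [altSum]
  | cons e l ih => simp [altSum, ih]; ring

lemma combo_ne {t1 t2 A B : ℝ} (h1 : 0 ≤ t1) (h2 : 0 ≤ t2) (h : t1 + t2 = 1)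
    (hA : A ≠ 0) (hB : B ≠ 0) (hs : 0 < A ↔ 0 < B) : t1 * A + t2 * B ≠ 0 := by
  rcases hA.lt_or_gt with hA' | hA'
  · have hB' : B < 0 :=
      (hB.lt_or_gt).resolve_right fun h0 => absurd (hs.mpr h0) (not_lt.mpr hA'.le)
    have hlt : t1 * A + t2 * B < 0 := by
      by_cases ht : t1 = 0
      · have h2' : t2 = 1 := by linarith
        simp [ht, h2']; exact hB'
      · have ht' : 0 < t1 := lt_of_le_of_ne h1 (Ne.symm ht)
        nlinarith
    exact ne_of_lt hlt
  · have hB' : 0 < B := hs.mp hA'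
    have hgt : 0 < t1 * A + t2 * B := by
      by_cases ht : t1 = 0
      · have h2' : t2 = 1 := by linarith
        simp [ht, h2']; exact hB'
      · have ht' : 0 < t1 := lt_of_le_of_ne h1 (Ne.symm ht)
        nlinarith
    exact (ne_of_gt hgt)

end AuxProofs
section GraphAux

variable {V : Type*} {G : SimpleGraph V}

/-- No two edges of the list share a vertex. -/
def DisjEdges (l : List (Sym2 V)) : Prop :=
  l.Pairwise (fun e f => ∀ v : V, ¬(v ∈ e ∧ v ∈ f))

lemma disjEdges_symm : Symmetric (fun e f : Sym2 V => ∀ v : V, ¬(v ∈ e ∧ v ∈ f)) :=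
  fun _ _ h v hv => h v ⟨hv.2, hv.1⟩

lemma vert_mem_support {u w : V} (p : G.Walk u w) {e : Sym2 V}
    (he : e ∈ p.edges) {x : V} (hx : x ∈ e) : x ∈ p.support := by
  induction e with
  | _ y z =>
    rcases Sym2.mem_iff.mp hx with rfl | rfl
    · exact p.fst_mem_support_of_mem_edges he
    · exact p.snd_mem_support_of_mem_edges he

lemma path_splitAlt {u v : V} (p : G.Walk u v) (hp : p.IsPath) :
    DisjEdges (splitAlt p.edges).1 ∧ DisjEdges (splitAlt p.edges).2 ∧
    (∀ e ∈ (splitAlt p.edges).2, u ∉ e) ∧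
    (Odd p.length → ∀ e ∈ (splitAlt p.edges).2, v ∉ e) ∧
    (Even p.length → ∀ e ∈ (splitAlt p.edges).1, v ∉ e) := by
  induction p with
  | nil => simp [splitAlt, DisjEdges]
  | @cons x y z h q ih =>
    obtain ⟨hq, hxq⟩ := (SimpleGraph.Walk.cons_isPath_iff h q).mp hp
    obtain ⟨D1, D2, Hstart, Hodd, Heven⟩ := ih hq
    simp only [SimpleGraph.Walk.edges_cons, splitAlt, SimpleGraph.Walk.length_cons]
    refine ⟨?_, D1, ?_, ?_, ?_⟩
    · refine List.pairwise_cons.mpr ⟨?_, D2⟩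
      intro f hf w hw
      rcases Sym2.mem_iff.mp hw.1 with rfl | rfl
      · exact hxq (vert_mem_support q (mem_of_splitAlt_snd hf) hw.2)
      · exact Hstart f hf hw.2
    · intro e he hx
      exact hxq (vert_mem_support q (mem_of_splitAlt_fst he) hx)
    · intro hodd
      have : Even q.length := by
        rcases Nat.even_or_odd q.length with h' | h'
        · exact h'
        · exact absurd hodd (by simp [Nat.odd_add_one, Nat.not_odd_iff_even,
            Nat.even_add_one, Nat.not_even_iff_odd, h'])
      exact Heven this
    · intro heven e he hz
      have hoddq : Odd q.length := by
        rcases Nat.even_or_odd q.length with h' | h'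
        · exact absurd heven (by simp [Nat.even_add_one, Nat.not_even_iff_odd,
            Nat.not_even_iff_odd, h'])
        · exact h'
      rcases List.mem_cons.mp he with rfl | he'
      · rcases Sym2.mem_iff.mp hz with h' | h'
        · exact hxq (h' ▸ q.end_mem_support)
        · subst h'
          rw [(SimpleGraph.Walk.isPath_iff_eq_nil (p := q)).mp hq] at hoddq
          simp at hoddq
      · exact Hodd hoddq e he' hz

lemma cycle_splitAlt {u : V} (p : G.Walk u u) (hc : p.IsCycle) (he : Even p.length) :
    DisjEdges (splitAlt p.edges).1 ∧ DisjEdges (splitAlt p.edges).2 := by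
  cases p with
  | nil => exact absurd rfl hc.ne_nil
  | @cons _ y _ h q =>
    obtain ⟨hq, _⟩ := (SimpleGraph.Walk.cons_isCycle_iff q h).mp hc
    obtain ⟨D1, D2, Hstart, Hodd, _⟩ := path_splitAlt q hq
    have hoddq : Odd q.length := by
      rw [SimpleGraph.Walk.length_cons] at he
      rcases Nat.even_or_odd q.length with h' | h'
      · exact absurd he (by simp [Nat.even_add_one, Nat.not_even_iff_odd,
          Nat.not_even_iff_odd, h'])
      · exact h'
    simp only [SimpleGraph.Walk.edges_cons, splitAlt]
    refine ⟨List.pairwise_cons.mpr ⟨?_, D2⟩, D1⟩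
    intro f hf w hw
    rcases Sym2.mem_iff.mp hw.1 with rfl | rfl
    · exact Hodd hoddq f hf hw.2
    · exact Hstart f hf hw.2

end GraphAux
section MainAux

variable {V : Type*} {G : SimpleGraph V}

lemma extendE_comb [Fintype G.edgeSet] (c d : ℝ) (f g : G.edgeSet → ℝ) (e : Sym2 V) :
    extendE G (c • f + d • g) e = c * extendE G f e + d * extendE G g e := by
  unfold extendE
  split
  · simp [mul_comm]
  · simp

lemma sum_map_extendE [Fintype G.edgeSet] (c : G.edgeSet → ℝ)
    (l : List (Sym2 V)) (hn : l.Nodup) (hs : ∀ e ∈ l, e ∈ G.edgeSet) :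
    (l.map (extendE G c)).sum = dot G c (chi G {x | x ∈ l}) := by
  induction l with
  | nil => simp [dot, chi]
  | cons e l ih =>
    have he : e ∈ G.edgeSet := hs e (by simp)
    have hel : e ∉ l := (List.nodup_cons.mp hn).1
    have hrec := ih (List.nodup_cons.mp hn).2 (fun x hx => hs x (List.mem_cons_of_mem _ hx))
    have hchi : ∀ x : G.edgeSet, chi G {y | y ∈ e :: l} x
        = (if x = (⟨e, he⟩ : G.edgeSet) then (1 : ℝ) else 0) + chi G {y | y ∈ l} x := by
      intro x
      unfold chi
      simp only [Set.mem_setOf_eq, List.mem_cons, Subtype.ext_iff]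
      by_cases h1 : (x : Sym2 V) = e
      · simp [h1, hel]
      · simp [h1]
    have : dot G c (chi G {y | y ∈ e :: l})
        = c ⟨e, he⟩ + dot G c (chi G {y | y ∈ l}) := by
      unfold dot
      simp only [hchi, mul_add, Finset.sum_add_distrib, mul_ite, mul_one, mul_zero]
      rw [Finset.sum_ite_eq' Finset.univ (⟨e, he⟩ : G.edgeSet) c]
      simp
    rw [List.map_cons, List.sum_cons, hrec, this]
    congr 1
    unfold extendE
    rw [dif_pos he]

lemma key_adj [Fintype G.edgeSet] {u v : V} (p : G.Walk u v)
    (hsp : IsSimplePathOrEvenCycle G p) :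
    ∃ M1 M2 : Set (Sym2 V), AdjacentMatchings G M2 M1 ∧
      ∀ c : G.edgeSet → ℝ, altSum (extendE G c) p.edges
        = dot G c (chi G M1) - dot G c (chi G M2) := by
  have hnd : p.edges.Nodup := by
    rcases hsp with ⟨hp, _⟩ | ⟨h, hc, _⟩
    · exact hp.edges_nodup
    · have := hc.edges_nodup
      rwa [SimpleGraph.Walk.edges_copy] at this
  have hsub : ∀ e ∈ p.edges, e ∈ G.edgeSet := fun e he => p.edges_subset_edgeSet he
  have hdisj : DisjEdges (splitAlt p.edges).1 ∧ DisjEdges (splitAlt p.edges).2 := by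
    rcases hsp with ⟨hp, _⟩ | ⟨h, hc, hev⟩
    · obtain ⟨D1, D2, _⟩ := path_splitAlt p hp
      exact ⟨D1, D2⟩
    · subst h
      rw [SimpleGraph.Walk.copy_rfl_rfl] at hc
      exact cycle_splitAlt p hc hev
  have hnd' : ((splitAlt p.edges).1 ++ (splitAlt p.edges).2).Nodup :=
    ((splitAlt_perm p.edges).nodup_iff).mpr hnd
  obtain ⟨hnd1, hnd2, hdisj12⟩ := List.nodup_append'.mp hnd'
  refine ⟨{x | x ∈ (splitAlt p.edges).1}, {x | x ∈ (splitAlt p.edges).2}, ⟨?_, ?_, ?_⟩, ?_⟩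
  · exact ⟨fun e he => hsub e (mem_of_splitAlt_snd he),
      fun e he f hf hne => (haveI : Std.Symm (fun e f : Sym2 V => ∀ v : V, ¬(v ∈ e ∧ v ∈ f)) :=
        ⟨fun _ _ h => disjEdges_symm h⟩; hdisj.2.forall he hf hne)⟩
  · exact ⟨fun e he => hsub e (mem_of_splitAlt_fst he),
      fun e he f hf hne => (haveI : Std.Symm (fun e f : Sym2 V => ∀ v : V, ¬(v ∈ e ∧ v ∈ f)) :=
        ⟨fun _ _ h => disjEdges_symm h⟩; hdisj.1.forall he hf hne)⟩
  · refine ⟨u, v, p, hsp, ?_⟩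
    ext e
    simp only [Set.mem_symmDiff, Set.mem_setOf_eq]
    constructor
    · rintro (⟨h1, _⟩ | ⟨h1, _⟩)
      · exact mem_of_splitAlt_snd h1
      · exact mem_of_splitAlt_fst h1
    · intro h1
      rcases (List.mem_append.mp ((splitAlt_perm p.edges).mem_iff.mpr h1)) with h2 | h2
      · exact Or.inr ⟨h2, fun h3 => hdisj12 h2 h3⟩
      · exact Or.inl ⟨h2, fun h3 => hdisj12 h3 h2⟩
  · intro c
    rw [altSum_eq_split,
      sum_map_extendE c _ hnd1 (fun e he => hsub e (mem_of_splitAlt_fst he)),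
      sum_map_extendE c _ hnd2 (fun e he => hsub e (mem_of_splitAlt_snd he))]

end MainAux
lemma sign_iff {V : Type*} {G : SimpleGraph V} [Fintype G.edgeSet] {a b : G.edgeSet → ℝ}
    (hab : SameOrientation G a b) {u v : V} (p : G.Walk u v)
    (hsp : IsSimplePathOrEvenCycle G p) :
    (0 < altSum (extendE G a) p.edges ↔ 0 < altSum (extendE G b) p.edges) := by
  obtain ⟨M1, M2, hadj, hval⟩ := key_adj p hsp
  rw [hval a, hval b, sub_pos, sub_pos]
  exact hab M2 M1 hadj
/-- If `a` and `b` lie on no hyperplane of `MA(G)` and induce the same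
orientation, then they lie in the same region of `MA(G)`. -/
theorem sameRegion_of_sameOrientation [Fintype V] [DecidableEq V]
    (G : SimpleGraph V) [DecidableRel G.Adj] (a b : G.edgeSet → ℝ)
    (ha : OffHyperplanes G a) (hb : OffHyperplanes G b)
    (hab : SameOrientation G a b) :
    b ∈ connectedComponentIn {x : G.edgeSet → ℝ | OffHyperplanes G x} a := by
  have key : segment ℝ a b ⊆ {x : G.edgeSet → ℝ | OffHyperplanes G x} := by
    rintro x ⟨t1, t2, ht1, ht2, hsum, rfl⟩
    intro u v p hsp
    have hx : altSum (extendE G (t1 • a + t2 • b)) p.edges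
        = t1 * altSum (extendE G a) p.edges + t2 * altSum (extendE G b) p.edges := by
      rw [show extendE G (t1 • a + t2 • b)
          = fun e => t1 * extendE G a e + t2 * extendE G b e from
        funext (extendE_comb t1 t2 a b), altSum_comb]
    rw [hx]
    exact combo_ne ht1 ht2 hsum (ha p hsp) (hb p hsp) (sign_iff hab p hsp)
  exact (Convex.isPreconnected (convex_segment a b)).subset_connectedComponentIn
    (left_mem_segment ℝ a b) key (right_mem_segment ℝ a b)
end
end
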